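/- Let φ be a normalized symmetric 3-cocycle which is a coboundary: φ(x,y,z) = x·g(y,z) − g(xy,z) + g(x,yz) − g(x,y) for some normalized 2-cochain g. Then g is symmetric if and only if g(x, x^{-1}) = 0 for all x ∈ G. -/
import Mathlib


/-- If `φ` is a normalized symmetric 3-cocycle which is the
coboundary of a normalized 2-cochain `g`, then `g` is symmetric iff
`g(x,x⁻¹) = 0` for all `x`. -/
theorem stmt3 {G : Type*} [Group G] {M : Type*} [AddCommGroup M]
    [DistribMulAction G M] (φ : G → G → G → M) (g : G → G → M)
    -- φ is normalized
    (hφnorm : ∀ x y z : G, (x = 1 ∨ y = 1 ∨ z = 1) → φ x y z = 0)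
    -- φ is a cocycle
    (hcocycle : ∀ x y z w : G,
      x • φ y z w - φ (x * y) z w + φ x (y * z) w - φ x y (z * w) + φ x y z = 0)
    -- φ is symmetric (invariant under the Σ₄-action)
    (hsym1 : ∀ x y z : G, φ x y z = - (x • φ x⁻¹ (x * y) z))
    (hsym2 : ∀ x y z : G, φ x y z = - φ (x * y) y⁻¹ (y * z))
    (hsym3 : ∀ x y z : G, φ x y z = - φ x (y * z) z⁻¹)
    -- g is a normalized 2-cochain
    (hgnorm : ∀ x : G, g 1 x = 0 ∧ g x 1 = 0)
    -- φ is the coboundary of g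
    (hcob : ∀ x y z : G, φ x y z = x • g y z - g (x * y) z + g x (y * z) - g x y) :
    -- g symmetric ↔ g(x,x⁻¹) = 0
    ((∀ x y : G, g x y = - (x • g x⁻¹ (x * y)) ∧ g x y = - g (x * y) y⁻¹))
    ↔ (∀ x : G, g x x⁻¹ = 0) := by
  have key1 : ∀ a b : G, φ a a⁻¹ b = 0 := by
    intro a b
    rw [hsym1, mul_inv_cancel, hφnorm a⁻¹ 1 b (Or.inr (Or.inl rfl))]
    simp
  have key2 : ∀ a b : G, φ a b b⁻¹ = 0 := by
    intro a b
    rw [hsym3, mul_inv_cancel, hφnorm a 1 b⁻¹⁻¹ (Or.inr (Or.inl rfl))]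
    simp
  constructor
  · intro h x
    have := (h x x⁻¹).2
    simpa [(hgnorm x).1] using this
  · intro h x y
    constructor
    · have := hcob x x⁻¹ (x * y)
      rw [key1] at this
      simp only [mul_inv_cancel, (hgnorm (x * y)).1, inv_mul_cancel_left, h x,
        smul_zero] at this
      linear_combination (norm := abel) -this
    · have := hcob x y y⁻¹
      rw [key2] at this
      simp only [mul_inv_cancel, (hgnorm x).2, h y, smul_zero] at this
      linear_combination (norm := abel) this
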